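/- Let Z be a random variable on a finite probability space with E Z = m, with a filtration F_0 (trivial) ⊆ F_1 ⊆ ... ⊆ F_t, Z being F_t-measurable. Let Z_i = E(Z|F_i), var_i = E((Z_i - E(Z_i|F_{i-1}))² | F_{i-1}), V = Σ_{i=1}^t var_i, dev_i = sup(|Z_i - Z_{i-1}| | F_{i-1}) (the conditional supremum), and dev = max_i dev_i. Then for any a ≥ 0 and values α, β ≥ 0: P({|Z - m| ≥ a} ∩ {V ≤ β} ∩ {dev ≤ α}) ≤ 2 exp(-a² / (2β + 2αa/3)). -/

import Mathlib

open MeasureTheory Real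

/-- The atom of `ω` in the σ-field `G`. -/
def atomOf {Ω : Type*} (G : MeasurableSpace Ω) (ω : Ω) : Set Ω :=
  {ω' | ∀ A : Set Ω, MeasurableSet[G] A → ω ∈ A → ω' ∈ A}

/-- The conditional supremum of `Y` given `G`: the maximum of `Y` over the `G`-atom
containing `ω`. -/
noncomputable def condSup {Ω : Type*} (G : MeasurableSpace Ω) (Y : Ω → ℝ) (ω : Ω) : ℝ :=
  sSup (Y '' atomOf G ω)

section Aux

variable {Ω : Type*} {G : MeasurableSpace Ω} {Y : Ω → ℝ} {ω ω' : Ω}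

lemma mem_atomOf_self : ω ∈ atomOf G ω := fun _ _ h => h

lemma atomOf_symm (h : ω' ∈ atomOf G ω) : ω ∈ atomOf G ω' := by
  intro A hA hω'
  by_contra hω
  exact h Aᶜ hA.compl hω hω'

lemma atomOf_eq (h : ω' ∈ atomOf G ω) : atomOf G ω' = atomOf G ω := by
  ext x
  constructor
  · exact fun hx A hA hω => hx A hA (h A hA hω)
  · exact fun hx A hA hω' => hx A hA (atomOf_symm h A hA hω')

lemma condSup_eq_of_mem (h : ω' ∈ atomOf G ω) : condSup G Y ω' = condSup G Y ω := by
  unfold condSup; rw [atomOf_eq h]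

lemma measurableSet_atomOf [Fintype Ω] : MeasurableSet[G] (atomOf G ω) := by
  have h : atomOf G ω = ⋂ A ∈ {A : Set Ω | MeasurableSet[G] A ∧ ω ∈ A}, A := by
    ext x
    simp only [atomOf, Set.mem_setOf_eq, Set.mem_iInter]
    tauto
  rw [h]
  exact MeasurableSet.biInter (Set.to_countable _) (fun A hA => hA.1)

lemma measurable_condSup [Fintype Ω] : Measurable[G] (condSup G Y) := by
  intro s _
  have h : condSup G Y ⁻¹' s = ⋃ ω ∈ {ω : Ω | condSup G Y ω ∈ s}, atomOf G ω := by
    ext x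
    simp only [Set.mem_preimage, Set.mem_iUnion, Set.mem_setOf_eq]
    constructor
    · exact fun hx => ⟨x, hx, mem_atomOf_self⟩
    · rintro ⟨ω, hω, hx⟩
      rwa [condSup_eq_of_mem hx]
  rw [h]
  exact MeasurableSet.biUnion (Set.to_countable _) (fun ω _ => measurableSet_atomOf)

lemma le_condSup [Fintype Ω] : Y ω ≤ condSup G Y ω := by
  apply le_csSup ((Set.Finite.image Y (Set.toFinite _)).bddAbove)
  exact ⟨ω, mem_atomOf_self, rfl⟩

lemma integrable_fin {Ω : Type*} [Fintype Ω] {m0 : MeasurableSpace Ω} (μ : Measure Ω)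
    [IsFiniteMeasure μ] {f : Ω → ℝ} (hf : Measurable f) : Integrable f μ := by
  rcases isEmpty_or_nonempty Ω with h | h
  · exact ⟨hf.aestronglyMeasurable, by simp [HasFiniteIntegral, lintegral_of_isEmpty]⟩
  obtain ⟨x₀, hx₀⟩ := Finite.exists_max (fun x => |f x|)
  exact ⟨hf.aestronglyMeasurable, HasFiniteIntegral.of_bounded (C := |f x₀|) (.of_forall hx₀)⟩

open Nat in
lemma fact_bound : ∀ n : ℕ, 2 * 3 ^ n ≤ (n + 2)! := by
  intro n
  induction n with
  | zero => simp [Nat.factorial]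
  | succ k ih =>
    have h : 2 * 3 ^ (k + 1) = 3 * (2 * 3 ^ k) := by ring
    rw [h]
    calc 3 * (2 * 3 ^ k) ≤ 3 * (k + 2)! := by omega
    _ ≤ (k + 3) * (k + 2)! := Nat.mul_le_mul_right _ (by omega)
    _ = (k + 3)! := rfl

open Nat in
lemma exp_taylor_bound {l α x : ℝ} (hl : 0 ≤ l) (h3 : l * α < 3) (hx : |x| ≤ α) :
    Real.exp (l * x) ≤ 1 + l * x + l ^ 2 / (2 * (1 - l * α / 3)) * x ^ 2 := by
  set u := l * x with hu
  set q : ℝ := l * α / 3 with hq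
  have hα : 0 ≤ α := le_trans (abs_nonneg x) hx
  have hq0 : 0 ≤ q := by positivity
  have hq1 : q < 1 := by rw [hq]; linarith
  have hulα : |u| ≤ l * α := by
    rw [hu, abs_mul, abs_of_nonneg hl]
    exact mul_le_mul_of_nonneg_left hx hl
  have hu3 : |u| / 3 ≤ q := by rw [hq]; linarith
  have hsum : Summable (fun n : ℕ => u ^ n / n !) := Real.summable_pow_div_factorial u
  have hexp : Real.exp u = ∑' n : ℕ, u ^ n / n ! := by
    rw [Real.exp_eq_exp_ℝ, NormedSpace.exp_eq_tsum_div]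
  have hsplit : Real.exp u = (1 + u) + ∑' n : ℕ, u ^ (n + 2) / (n + 2)! := by
    rw [hexp, ← hsum.sum_add_tsum_nat_add 2]
    norm_num [Finset.sum_range_succ]
  have hterm : ∀ n : ℕ, u ^ (n + 2) / (n + 2)! ≤ u ^ 2 / 2 * q ^ n := by
    intro n
    have habs : u ^ (n + 2) ≤ |u| ^ (n + 2) := by
      rw [← abs_pow]; exact le_abs_self _
    have hfac : (0:ℝ) < (n + 2)! := by positivity
    calc u ^ (n + 2) / (n + 2)!
        ≤ |u| ^ (n + 2) / (n + 2)! := by gcongr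
      _ ≤ |u| ^ (n + 2) / (2 * 3 ^ n) := by
          gcongr
          exact_mod_cast fact_bound n
      _ = u ^ 2 / 2 * (|u| / 3) ^ n := by
          rw [pow_add, sq_abs, div_pow]
          field_simp
      _ ≤ u ^ 2 / 2 * q ^ n := by
          apply mul_le_mul_of_nonneg_left _ (by positivity)
          exact pow_le_pow_left₀ (by positivity) hu3 n
  have hgeo : Summable (fun n : ℕ => u ^ 2 / 2 * q ^ n) :=
    (summable_geometric_of_lt_one hq0 hq1).mul_left _
  have hsum2 : Summable (fun n : ℕ => u ^ (n + 2) / (n + 2)!) := by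
    exact_mod_cast (summable_nat_add_iff 2).mpr hsum
  have htail : (∑' n : ℕ, u ^ (n + 2) / (n + 2)!) ≤ u ^ 2 / 2 * (1 - q)⁻¹ := by
    calc (∑' n : ℕ, u ^ (n + 2) / (n + 2)!) ≤ ∑' n : ℕ, u ^ 2 / 2 * q ^ n :=
          Summable.tsum_le_tsum hterm hsum2 hgeo
      _ = u ^ 2 / 2 * (1 - q)⁻¹ := by rw [tsum_mul_left, tsum_geometric_of_lt_one hq0 hq1]
  have hfin : u ^ 2 / 2 * (1 - q)⁻¹ = l ^ 2 / (2 * (1 - q)) * x ^ 2 := by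
    rw [hu]
    field_simp
  rw [hsplit]
  rw [hfin] at htail
  linarith

lemma telescope_Icc (F : ℕ → ℝ) : ∀ n : ℕ, ∑ i ∈ Finset.Icc 1 n, (F i - F (i - 1)) = F n - F 0 := by
  intro n
  induction n with
  | zero => simp
  | succ k ih =>
    rw [Finset.sum_Icc_succ_top (by omega : 1 ≤ k + 1), ih]
    simp

end Aux

open Finset in
lemma oneSided {Ω : Type*} [Fintype Ω] [m0 : MeasurableSpace Ω]
    (μ : Measure Ω) [IsProbabilityMeasure μ] (t : ℕ)
    (𝒢 : ℕ → MeasurableSpace Ω) (hmono : Monotone 𝒢) (hle : ∀ i, 𝒢 i ≤ m0)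
    (X D V : ℕ → Ω → ℝ) (l c α β a : ℝ)
    (hl : 0 ≤ l) (hc : 0 ≤ c) (hβ : 0 ≤ β)
    (hXmeas : ∀ i ∈ Icc 1 t, StronglyMeasurable[𝒢 i] (X i))
    (hDmeas : ∀ i ∈ Icc 1 t, Measurable[𝒢 (i-1)] (D i))
    (hVmeas : ∀ i ∈ Icc 1 t, StronglyMeasurable[𝒢 (i-1)] (V i))
    (hX0 : ∀ i ∈ Icc 1 t, μ[X i|𝒢 (i-1)] =ᵐ[μ] 0)
    (hXD : ∀ i ∈ Icc 1 t, ∀ ω, |X i ω| ≤ D i ω)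
    (hV : ∀ i ∈ Icc 1 t, μ[fun ω => X i ω ^ 2|𝒢 (i-1)] =ᵐ[μ] V i)
    (hexp : ∀ x : ℝ, |x| ≤ α → Real.exp (l * x) ≤ 1 + l * x + c * x ^ 2) :
    μ {ω | a ≤ ∑ i ∈ Icc 1 t, X i ω ∧ (∑ i ∈ Icc 1 t, V i ω) ≤ β ∧
        ∀ i ∈ Icc 1 t, D i ω ≤ α}
      ≤ ENNReal.ofReal (Real.exp (-(l * a) + c * β)) := by
  classical
  have hXm0 : ∀ i ∈ Icc 1 t, Measurable (X i) := fun i hi =>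
    ((hXmeas i hi).measurable).mono (hle i) le_rfl
  have hVm0 : ∀ i ∈ Icc 1 t, Measurable (V i) := fun i hi =>
    ((hVmeas i hi).measurable).mono (hle (i-1)) le_rfl
  have hDm0 : ∀ i ∈ Icc 1 t, Measurable (D i) := fun i hi =>
    (hDmeas i hi).mono (hle (i-1)) le_rfl
  have hint : ∀ f : Ω → ℝ, Measurable f → Integrable f μ := fun f hf => integrable_fin μ hf
  set A : ℕ → Set Ω := fun j =>
    {ω | (∀ i ∈ Icc 1 j, D i ω ≤ α) ∧ ∑ i ∈ Icc 1 j, V i ω ≤ β} with hA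
  have hAmeas : ∀ j ∈ Icc 1 t, ∀ k, j - 1 ≤ k → MeasurableSet[𝒢 k] (A j) := by
    intro j hj k hk
    have hDset : ∀ i ∈ Icc 1 j, MeasurableSet[𝒢 k] {ω | D i ω ≤ α} := by
      intro i hi
      have hit : i ∈ Icc 1 t := by simp only [mem_Icc] at hi hj ⊢; omega
      have hik : i - 1 ≤ k := by simp only [mem_Icc] at hi hj; omega
      exact measurableSet_le ((hDmeas i hit).mono (hmono hik) le_rfl) measurable_const
    have hVsum : Measurable[𝒢 k] (fun ω => ∑ i ∈ Icc 1 j, V i ω) := by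
      apply Finset.measurable_sum
      intro i hi
      have hit : i ∈ Icc 1 t := by simp only [mem_Icc] at hi hj ⊢; omega
      have hik : i - 1 ≤ k := by simp only [mem_Icc] at hi hj; omega
      exact ((hVmeas i hit).measurable).mono (hmono hik) le_rfl
    have hrw : A j = (⋂ i ∈ Icc 1 j, {ω | D i ω ≤ α}) ∩ {ω | ∑ i ∈ Icc 1 j, V i ω ≤ β} := by
      ext ω; simp [hA, Set.mem_iInter]
    rw [hrw]
    exact (Finset.measurableSet_biInter _ hDset).inter (measurableSet_le hVsum measurable_const)
  set g : ℕ → Ω → ℝ := fun j ω =>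
    Real.exp (l * (A j).indicator (X j) ω - c * (A j).indicator (V j) ω) with hg
  have hgmeas : ∀ j ∈ Icc 1 t, ∀ k, j ≤ k → Measurable[𝒢 k] (g j) := by
    intro j hj k hk
    have hAk : MeasurableSet[𝒢 k] (A j) := hAmeas j hj k (by omega)
    have hXk : Measurable[𝒢 k] (X j) := (hXmeas j hj).measurable.mono (hmono hk) le_rfl
    have hVk : Measurable[𝒢 k] (V j) :=
      (hVmeas j hj).measurable.mono (hmono (le_trans (Nat.sub_le j 1) hk)) le_rfl
    exact Real.measurable_exp.comp
      (((hXk.indicator hAk).const_mul l).sub ((hVk.indicator hAk).const_mul c))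
  have hgm0 : ∀ j ∈ Icc 1 t, Measurable (g j) := fun j hj =>
    (hgmeas j hj t (by simp only [mem_Icc] at hj; omega)).mono (hle t) le_rfl
  have hgpos : ∀ j, ∀ ω, 0 < g j ω := fun j ω => Real.exp_pos _
  have hK : ∀ j, j ≤ t → ∫ ω, ∏ i ∈ Icc 1 j, g i ω ∂μ ≤ 1 := by
    intro j
    induction j with
    | zero => intro _; simp
    | succ j ih =>
      intro hjt
      have hjt' : j ≤ t := by omega
      have hmem : j + 1 ∈ Icc 1 t := by simp only [mem_Icc]; omega
      set P : Ω → ℝ := fun ω => ∏ i ∈ Icc 1 j, g i ω with hP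
      have hPmeas : Measurable[𝒢 j] P := by
        apply Finset.measurable_prod
        intro i hi
        have hit : i ∈ Icc 1 t := by simp only [mem_Icc] at hi ⊢; omega
        exact hgmeas i hit j (by simp only [mem_Icc] at hi; omega)
      have hPm0 : Measurable P := hPmeas.mono (hle j) le_rfl
      have hPpos : ∀ ω, 0 ≤ P ω := fun ω => Finset.prod_nonneg fun i _ => (hgpos i ω).le
      have hAj : MeasurableSet[𝒢 j] (A (j+1)) := hAmeas (j+1) hmem j (by omega)
      have hVj : Measurable[𝒢 j] (V (j+1)) := (hVmeas (j+1) hmem).measurable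
      have hXj1 : Measurable[𝒢 (j+1)] (X (j+1)) := (hXmeas (j+1) hmem).measurable
      have hXm : Measurable (X (j+1)) := hXj1.mono (hle (j+1)) le_rfl
      have hVm : Measurable (V (j+1)) := hVj.mono (hle j) le_rfl
      set e : Ω → ℝ := fun ω => Real.exp (-(c * (A (j+1)).indicator (V (j+1)) ω)) with he
      set f : Ω → ℝ := fun ω => Real.exp (l * (A (j+1)).indicator (X (j+1)) ω) with hf
      set Q : Ω → ℝ := fun ω => P ω * e ω with hQ
      have hQmeas : Measurable[𝒢 j] Q :=
        hPmeas.mul (Real.measurable_exp.comp ((hVj.indicator hAj).const_mul c).neg)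
      have hQm0 : Measurable Q := hQmeas.mono (hle j) le_rfl
      have hQnonneg : ∀ ω, 0 ≤ Q ω := fun ω => mul_nonneg (hPpos ω) (Real.exp_pos _).le
      have hfmeas : Measurable[𝒢 (j+1)] f := by
        have hAj' : MeasurableSet[𝒢 (j+1)] (A (j+1)) := hAmeas (j+1) hmem (j+1) (by omega)
        exact Real.measurable_exp.comp ((hXj1.indicator hAj').const_mul l)
      have hfm0 : Measurable f := hfmeas.mono (hle (j+1)) le_rfl
      have hef : ∀ ω, Q ω * f ω = P ω * g (j+1) ω := by
        intro ω
        simp only [hQ, he, hf, hg]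
        rw [mul_assoc, ← Real.exp_add]
        congr 2
        ring
      have hprod_eq : (fun ω => ∏ i ∈ Icc 1 (j+1), g i ω) = fun ω => Q ω * f ω := by
        funext ω
        rw [Finset.prod_Icc_succ_top (by omega : 1 ≤ j + 1), hef ω]
      have hDj1 : ∀ ω ∈ A (j+1), |X (j+1) ω| ≤ α := by
        intro ω hω
        exact le_trans (hXD (j+1) hmem ω) (hω.1 (j+1) (by simp only [mem_Icc]; omega))
      set ind1 : Ω → ℝ := (A (j+1)).indicator (fun ω' => Real.exp (l * X (j+1) ω') - 1) with hind1
      set poly : Ω → ℝ := fun ω' => l * X (j+1) ω' + c * X (j+1) ω' ^ 2 with hpoly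
      set ind2 : Ω → ℝ := (A (j+1)).indicator poly with hind2
      have hind1m : Measurable ind1 :=
        ((Real.measurable_exp.comp (hXm.const_mul l)).sub measurable_const).indicator
          ((hle j) _ hAj)
      have hpolym : Measurable poly := (hXm.const_mul l).add ((hXm.pow_const 2).const_mul c)
      have hind2m : Measurable ind2 := hpolym.indicator ((hle j) _ hAj)
      have hfind : f = ind1 + fun _ => (1:ℝ) := by
        funext ω
        by_cases hω : ω ∈ A (j+1) <;>
          simp [hf, hind1, Set.indicator_of_mem, Set.indicator_of_notMem, hω]
      have step1 : μ[ind1|𝒢 j] ≤ᵐ[μ] μ[ind2|𝒢 j] := by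
        apply condExp_mono (hint _ hind1m) (hint _ hind2m)
        apply Filter.Eventually.of_forall
        intro ω
        by_cases hω : ω ∈ A (j+1)
        · simp only [hind1, hind2, Set.indicator_of_mem hω]
          have := hexp _ (hDj1 ω hω)
          simp only [hpoly]
          linarith
        · simp [hind1, hind2, Set.indicator_of_notMem hω]
      have step2 : μ[ind2|𝒢 j] =ᵐ[μ] (A (j+1)).indicator (μ[poly|𝒢 j]) :=
        condExp_indicator (hint _ hpolym) hAj
      have step3 : μ[poly|𝒢 j] =ᵐ[μ] fun ω => c * V (j+1) ω := by
        have h1 : poly = l • X (j+1) + c • fun ω' => X (j+1) ω' ^ 2 := by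
          funext ω'; simp [hpoly, smul_eq_mul]
        rw [h1]
        have e1 := condExp_add (μ := μ) (m := 𝒢 j)
          ((hint _ hXm).smul l) ((hint _ (hXm.pow_const 2)).smul c)
        refine e1.trans ?_
        have e2 := condExp_smul (μ := μ) (m := 𝒢 j) l (X (j+1))
        have e3 := condExp_smul (μ := μ) (m := 𝒢 j) c (fun ω' => X (j+1) ω' ^ 2)
        have e4 := hX0 (j+1) hmem
        have e5 := hV (j+1) hmem
        filter_upwards [e2, e3, e4, e5] with ω h2 h3 h4 h5
        simp only [Nat.add_sub_cancel, Pi.add_apply, Pi.smul_apply, Pi.zero_apply, smul_eq_mul] at h2 h3 h4 h5 ⊢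
        rw [h2, h3, h4, h5]
        simp
      have step4 : (A (j+1)).indicator (μ[poly|𝒢 j]) =ᵐ[μ]
          fun ω => c * (A (j+1)).indicator (V (j+1)) ω := by
        filter_upwards [step3] with ω h3
        by_cases hω : ω ∈ A (j+1) <;>
          simp [Set.indicator_of_mem, Set.indicator_of_notMem, hω, h3]
      have hcond : μ[f|𝒢 j] ≤ᵐ[μ] fun ω => 1 + c * (A (j+1)).indicator (V (j+1)) ω := by
        rw [hfind]
        have e1 := condExp_add (μ := μ) (m := 𝒢 j) (hint _ hind1m) (integrable_const (1:ℝ))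
        have e2 : μ[fun _ : Ω => (1:ℝ)|𝒢 j] = fun _ => (1:ℝ) := condExp_const (hle j) 1
        refine e1.trans_le ?_
        rw [e2]
        filter_upwards [step1, step2, step4] with ω h1 h2 h4
        simp only [Pi.add_apply]
        have : (μ[ind1|𝒢 j]) ω ≤ c * (A (j+1)).indicator (V (j+1)) ω := by
          rw [← h4, ← h2]; exact h1
        linarith
      have hmul := condExp_mul_of_stronglyMeasurable_left (μ := μ) hQmeas.stronglyMeasurable
        (hint _ (hQm0.mul hfm0)) (hint _ hfm0)
      have hQf_le : μ[Q * f|𝒢 j] ≤ᵐ[μ] P := by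
        filter_upwards [hmul, hcond] with ω h1 h2
        have hPQ : Q ω * Real.exp (c * (A (j+1)).indicator (V (j+1)) ω) = P ω := by
          simp only [hQ, he]
          rw [mul_assoc, ← Real.exp_add]
          simp
        calc (μ[Q * f|𝒢 j]) ω = Q ω * (μ[f|𝒢 j]) ω := h1
          _ ≤ Q ω * (1 + c * (A (j+1)).indicator (V (j+1)) ω) :=
              mul_le_mul_of_nonneg_left h2 (hQnonneg ω)
          _ ≤ Q ω * Real.exp (c * (A (j+1)).indicator (V (j+1)) ω) := by
              apply mul_le_mul_of_nonneg_left _ (hQnonneg ω)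
              have := Real.add_one_le_exp (c * (A (j+1)).indicator (V (j+1)) ω)
              linarith
          _ = P ω := hPQ
      calc ∫ ω, ∏ i ∈ Icc 1 (j+1), g i ω ∂μ = ∫ ω, (Q * f) ω ∂μ := by rw [hprod_eq]; rfl
        _ = ∫ ω, (μ[Q * f|𝒢 j]) ω ∂μ := (integral_condExp (hle j)).symm
        _ ≤ ∫ ω, P ω ∂μ := integral_mono_ae integrable_condExp (hint _ hPm0) hQf_le
        _ ≤ 1 := ih hjt'
  -- final assembly
  set T : Ω → ℝ := fun ω => ∏ i ∈ Icc 1 t, g i ω with hT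
  have hTm0 : Measurable T := Finset.measurable_prod _ fun i hi => hgm0 i hi
  have hTnonneg : ∀ ω, 0 ≤ T ω := fun ω => Finset.prod_nonneg fun i _ => (hgpos i ω).le
  set S : Set Ω := {ω | a ≤ ∑ i ∈ Icc 1 t, X i ω ∧ (∑ i ∈ Icc 1 t, V i ω) ≤ β ∧
      ∀ i ∈ Icc 1 t, D i ω ≤ α} with hS
  have hSmeas : MeasurableSet S := by
    have h1 : MeasurableSet {ω | a ≤ ∑ i ∈ Icc 1 t, X i ω} :=
      measurableSet_le measurable_const (Finset.measurable_sum _ fun i hi => hXm0 i hi)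
    have h2 : MeasurableSet {ω | (∑ i ∈ Icc 1 t, V i ω) ≤ β} :=
      measurableSet_le (Finset.measurable_sum _ fun i hi => hVm0 i hi) measurable_const
    have h3 : MeasurableSet {ω | ∀ i ∈ Icc 1 t, D i ω ≤ α} := by
      have : {ω | ∀ i ∈ Icc 1 t, D i ω ≤ α} = ⋂ i ∈ Icc 1 t, {ω | D i ω ≤ α} := by
        ext ω; simp [Set.mem_iInter]
      rw [this]
      exact Finset.measurableSet_biInter _ fun i hi =>
        measurableSet_le (hDm0 i hi) measurable_const
    have : S = {ω | a ≤ ∑ i ∈ Icc 1 t, X i ω} ∩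
        ({ω | (∑ i ∈ Icc 1 t, V i ω) ≤ β} ∩ {ω | ∀ i ∈ Icc 1 t, D i ω ≤ α}) := by
      ext ω; simp [hS, Set.mem_inter_iff, and_assoc]
    rw [this]
    exact h1.inter (h2.inter h3)
  have hVpos : ∀ᵐ ω ∂μ, ∀ i, i ∈ Icc 1 t → 0 ≤ V i ω := by
    rw [ae_all_iff]
    intro i
    by_cases hi : i ∈ Icc 1 t
    · have hnn : (0:Ω → ℝ) ≤ᵐ[μ] μ[fun ω => X i ω ^ 2|𝒢 (i-1)] :=
        condExp_nonneg (Filter.Eventually.of_forall fun ω => sq_nonneg _)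
      filter_upwards [hV i hi, hnn] with ω h1 h2
      intro _
      rw [← h1]
      exact h2
    · exact Filter.Eventually.of_forall fun ω h => absurd h hi
  have hAE : ∀ᵐ ω ∂μ, S.indicator (fun _ => (1:ℝ)) ω ≤ Real.exp (-(l * a) + c * β) * T ω := by
    filter_upwards [hVpos] with ω hVω
    by_cases hωS : ω ∈ S
    · rw [Set.indicator_of_mem hωS]
      obtain ⟨h1, h2, h3⟩ := hωS
      have hωA : ∀ i ∈ Icc 1 t, ω ∈ A i := by
        intro i hi
        refine ⟨fun k hk => h3 k ?_, ?_⟩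
        · simp only [mem_Icc] at hk hi ⊢; omega
        · refine le_trans (Finset.sum_le_sum_of_subset_of_nonneg ?_ fun k hk _ => hVω k hk) h2
          apply Finset.Icc_subset_Icc le_rfl
          simp only [mem_Icc] at hi; omega
      have hXsum : ∑ i ∈ Icc 1 t, (A i).indicator (X i) ω = ∑ i ∈ Icc 1 t, X i ω :=
        Finset.sum_congr rfl fun i hi => Set.indicator_of_mem (hωA i hi) _
      have hVsum : ∑ i ∈ Icc 1 t, (A i).indicator (V i) ω = ∑ i ∈ Icc 1 t, V i ω :=
        Finset.sum_congr rfl fun i hi => Set.indicator_of_mem (hωA i hi) _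
      have hTexp : T ω = Real.exp (∑ i ∈ Icc 1 t,
          (l * (A i).indicator (X i) ω - c * (A i).indicator (V i) ω)) := by
        rw [Real.exp_sum]
      rw [hTexp, ← Real.exp_add]
      apply Real.one_le_exp
      rw [Finset.sum_sub_distrib, ← Finset.mul_sum, ← Finset.mul_sum, hXsum, hVsum]
      have e1 : l * a ≤ l * ∑ i ∈ Icc 1 t, X i ω := mul_le_mul_of_nonneg_left h1 hl
      have e2 : c * ∑ i ∈ Icc 1 t, V i ω ≤ c * β := mul_le_mul_of_nonneg_left h2 hc
      linarith
    · rw [Set.indicator_of_notMem hωS]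
      exact mul_nonneg (Real.exp_pos _).le (hTnonneg ω)
  have hμS : (μ S).toReal = ∫ ω, S.indicator (fun _ => (1:ℝ)) ω ∂μ := by
    rw [integral_indicator_const (1:ℝ) hSmeas]; simp; rfl
  calc μ S = ENNReal.ofReal ((μ S).toReal) := (ENNReal.ofReal_toReal (measure_ne_top μ S)).symm
    _ ≤ ENNReal.ofReal (Real.exp (-(l * a) + c * β)) := by
        apply ENNReal.ofReal_le_ofReal
        rw [hμS]
        calc ∫ ω, S.indicator (fun _ => (1:ℝ)) ω ∂μ
            ≤ ∫ ω, Real.exp (-(l * a) + c * β) * T ω ∂μ :=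
              integral_mono_ae (hint _ (measurable_const.indicator hSmeas))
                ((hint _ hTm0).const_mul _) hAE
          _ = Real.exp (-(l * a) + c * β) * ∫ ω, T ω ∂μ := integral_const_mul _ _
          _ ≤ Real.exp (-(l * a) + c * β) * 1 :=
              mul_le_mul_of_nonneg_left (hK t le_rfl) (Real.exp_pos _).le
          _ = Real.exp (-(l * a) + c * β) := mul_one _

open Finset in
/-- Bernstein-type martingale inequality with conditional variances and deviations
(McDiarmid, Thm 3.15, two-sided version). -/
theorem stmt5 {Ω : Type*} [Fintype Ω] [m0 : MeasurableSpace Ω]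
    (μ : Measure Ω) [IsProbabilityMeasure μ] (t : ℕ) (ht : 0 < t)
    (𝒢 : ℕ → MeasurableSpace Ω) (hmono : Monotone 𝒢) (hle : ∀ i, 𝒢 i ≤ m0)
    (h0 : 𝒢 0 = ⊥) (Z : Ω → ℝ) (hZ : Measurable[𝒢 t] Z)
    (m : ℝ) (hm : m = ∫ ω, Z ω ∂μ) (a α β : ℝ) (ha : 0 ≤ a) (hα : 0 ≤ α) (hβ : 0 ≤ β) :
    μ {ω | a ≤ |Z ω - m| ∧
        (∑ i ∈ Finset.Icc 1 t,
          (μ[fun ω' => ((μ[Z|𝒢 i]) ω' - (μ[(μ[Z|𝒢 i])|𝒢 (i - 1)]) ω') ^ 2|𝒢 (i - 1)]) ω)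
          ≤ β ∧
        ((Finset.Icc 1 t).sup' (Finset.nonempty_Icc.mpr ht)
          (fun i => condSup (𝒢 (i - 1))
            (fun ω' => |(μ[Z|𝒢 i]) ω' - (μ[Z|𝒢 (i - 1)]) ω'|) ω)) ≤ α}
      ≤ ENNReal.ofReal (2 * Real.exp (-a ^ 2 / (2 * β + 2 * α * a / 3))) := by
  classical
  have hZm0 : Measurable Z := hZ.mono (hle t) le_rfl
  have hZint : Integrable Z μ := integrable_fin μ hZm0
  have hZt : μ[Z|𝒢 t] = Z :=
    condExp_of_stronglyMeasurable (hle t) hZ.stronglyMeasurable hZint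
  have hZ0 : μ[Z|𝒢 0] = fun _ => m := by
    rw [h0, condExp_bot]
    funext ω
    exact hm.symm
  -- one-sided bound for each sign
  have main : ∀ l c : ℝ, 0 ≤ l → 0 ≤ c →
      (∀ x : ℝ, |x| ≤ α → Real.exp (l * x) ≤ 1 + l * x + c * x ^ 2) →
      ∀ ε : ℝ, ε = 1 ∨ ε = -1 →
      μ {ω | a ≤ ε * (Z ω - m) ∧
          (∑ i ∈ Icc 1 t,
            (μ[fun ω' => ((μ[Z|𝒢 i]) ω' - (μ[(μ[Z|𝒢 i])|𝒢 (i - 1)]) ω') ^ 2|𝒢 (i - 1)]) ω)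
            ≤ β ∧
          ∀ i ∈ Icc 1 t, condSup (𝒢 (i - 1))
            (fun ω' => |(μ[Z|𝒢 i]) ω' - (μ[Z|𝒢 (i - 1)]) ω'|) ω ≤ α}
        ≤ ENNReal.ofReal (Real.exp (-(l * a) + c * β)) := by
    intro l c hl hc hexp ε hε
    set X : ℕ → Ω → ℝ := fun i ω => ε * ((μ[Z|𝒢 i]) ω - (μ[Z|𝒢 (i-1)]) ω) with hX
    set Df : ℕ → Ω → ℝ := fun i =>
      condSup (𝒢 (i-1)) (fun ω' => |(μ[Z|𝒢 i]) ω' - (μ[Z|𝒢 (i-1)]) ω'|) with hDf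
    set Vf : ℕ → Ω → ℝ := fun i =>
      μ[fun ω' => ((μ[Z|𝒢 i]) ω' - (μ[(μ[Z|𝒢 i])|𝒢 (i - 1)]) ω') ^ 2|𝒢 (i - 1)] with hVf
    have hε2 : ε * ε = 1 := by rcases hε with h | h <;> simp [h]
    have hε2sq : ε ^ 2 = 1 := by rcases hε with h | h <;> simp [h]
    have habs : ∀ i ω, |X i ω| = |(μ[Z|𝒢 i]) ω - (μ[Z|𝒢 (i-1)]) ω| := by
      intro i ω
      rcases hε with h | h
      · simp [hX, h, abs_mul]
      · simp [hX, h, abs_mul, abs_sub_comm]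
    have hXmeas : ∀ i ∈ Icc 1 t, StronglyMeasurable[𝒢 i] (X i) := by
      intro i _
      exact (stronglyMeasurable_condExp.sub
        (stronglyMeasurable_condExp.mono (hmono (Nat.sub_le i 1)))).const_mul ε
    have hDmeas : ∀ i ∈ Icc 1 t, Measurable[𝒢 (i-1)] (Df i) := fun i _ => measurable_condSup
    have hVmeas : ∀ i ∈ Icc 1 t, StronglyMeasurable[𝒢 (i-1)] (Vf i) := fun i _ =>
      stronglyMeasurable_condExp
    have htower : ∀ i : ℕ, μ[μ[Z|𝒢 i]|𝒢 (i-1)] =ᵐ[μ] μ[Z|𝒢 (i-1)] := fun i =>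
      condExp_condExp_of_le (hmono (Nat.sub_le i 1)) (hle i)
    have hprev : ∀ i : ℕ, μ[μ[Z|𝒢 (i-1)]|𝒢 (i-1)] = μ[Z|𝒢 (i-1)] := fun i =>
      condExp_of_stronglyMeasurable (hle (i-1)) stronglyMeasurable_condExp integrable_condExp
    have hX0 : ∀ i ∈ Icc 1 t, μ[X i|𝒢 (i-1)] =ᵐ[μ] 0 := by
      intro i _
      have h1 : X i = ε • (μ[Z|𝒢 i] - μ[Z|𝒢 (i-1)]) := by
        funext ω; simp [hX, smul_eq_mul]
      rw [h1]
      refine (condExp_smul (μ := μ) (m := 𝒢 (i-1)) ε (μ[Z|𝒢 i] - μ[Z|𝒢 (i-1)])).trans ?_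
      have h3 := condExp_sub (μ := μ) (m := 𝒢 (i-1)) (f := μ[Z|𝒢 i]) (g := μ[Z|𝒢 (i-1)])
        integrable_condExp integrable_condExp
      filter_upwards [h3, htower i] with ω h3ω h4ω
      simp only [Pi.smul_apply, smul_eq_mul, Pi.zero_apply]
      rw [h3ω]
      simp only [Pi.sub_apply]
      rw [hprev i, h4ω]
      ring
    have hXD : ∀ i ∈ Icc 1 t, ∀ ω, |X i ω| ≤ Df i ω := by
      intro i _ ω
      rw [habs i ω]
      exact le_condSup (G := 𝒢 (i-1))
        (Y := fun ω' => |(μ[Z|𝒢 i]) ω' - (μ[Z|𝒢 (i - 1)]) ω'|) (ω := ω)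
    have hV : ∀ i ∈ Icc 1 t, μ[fun ω => X i ω ^ 2|𝒢 (i-1)] =ᵐ[μ] Vf i := by
      intro i _
      refine (condExp_congr_ae ?_).trans (ae_eq_refl _)
      filter_upwards [htower i] with ω hω
      rw [hX]
      simp only
      rw [hω, mul_pow, hε2sq, one_mul]
    have htel : ∀ ω, ∑ i ∈ Icc 1 t, X i ω = ε * (Z ω - m) := by
      intro ω
      have h1 : ∑ i ∈ Icc 1 t, X i ω
          = ε * ∑ i ∈ Icc 1 t, ((μ[Z|𝒢 i]) ω - (μ[Z|𝒢 (i-1)]) ω) := by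
        rw [Finset.mul_sum]
      rw [h1, telescope_Icc (fun k => (μ[Z|𝒢 k]) ω) t]
      rw [hZt, hZ0]
    have hseteq : {ω | a ≤ ε * (Z ω - m) ∧ (∑ i ∈ Icc 1 t, Vf i ω) ≤ β ∧
          ∀ i ∈ Icc 1 t, Df i ω ≤ α}
        = {ω | a ≤ ∑ i ∈ Icc 1 t, X i ω ∧ (∑ i ∈ Icc 1 t, Vf i ω) ≤ β ∧
          ∀ i ∈ Icc 1 t, Df i ω ≤ α} := by
      ext ω
      simp only [Set.mem_setOf_eq, htel ω]
    rw [hseteq]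
    exact oneSided μ t 𝒢 hmono hle X Df Vf l c α β a hl hc hβ hXmeas hDmeas hVmeas
      hX0 hXD hV hexp
  -- trivial case
  by_cases htriv : 2 * β + 2 * α * a / 3 = 0 ∨ a = 0
  · have hRHS : (2:ℝ) * Real.exp (-a ^ 2 / (2 * β + 2 * α * a / 3)) = 2 := by
      rcases htriv with h | h
      · rw [h, div_zero, Real.exp_zero, mul_one]
      · rw [h]; norm_num
    rw [hRHS]
    calc μ _ ≤ 1 := prob_le_one
      _ ≤ ENNReal.ofReal 2 := by
          rw [← ENNReal.ofReal_one]
          exact ENNReal.ofReal_le_ofReal (by norm_num)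
  push_neg at htriv
  obtain ⟨hd0, ha0⟩ := htriv
  have hapos : 0 < a := lt_of_le_of_ne ha (Ne.symm ha0)
  -- choose parameters
  obtain ⟨l, c, hl, hc, hexpb, hexponent⟩ : ∃ l c : ℝ, 0 ≤ l ∧ 0 ≤ c ∧
      (∀ x : ℝ, |x| ≤ α → Real.exp (l * x) ≤ 1 + l * x + c * x ^ 2) ∧
      -(l * a) + c * β = -a ^ 2 / (2 * β + 2 * α * a / 3) := by
    by_cases hb : β = 0
    · have hαpos : 0 < α := by
        rcases lt_or_eq_of_le hα with h | h
        · exact h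
        · exfalso; apply hd0; rw [hb, ← h]; ring
      have hlα : (3 / (2 * α)) * α = 3 / 2 := by field_simp
      refine ⟨3 / (2 * α), (3 / (2 * α)) ^ 2, by positivity, by positivity, ?_, ?_⟩
      · intro x hx
        have hceq : (3 / (2 * α)) ^ 2
            = (3 / (2 * α)) ^ 2 / (2 * (1 - (3 / (2 * α)) * α / 3)) := by
          rw [hlα]; norm_num
        rw [hceq]
        exact exp_taylor_bound (by positivity) (by rw [hlα]; norm_num) hx
      · rw [hb]
        field_simp
        ring
    · have hbpos : 0 < β := lt_of_le_of_ne hβ (Ne.symm hb)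
      have hαa : 0 ≤ α * a / 3 := by positivity
      set b : ℝ := β + α * a / 3 with hbdef
      have hbpos' : 0 < b := by rw [hbdef]; linarith
      have h1 : 1 - (a / b) * α / 3 = β / b := by
        field_simp
        ring
      have hlα3 : (a / b) * α < 3 := by
        rw [div_mul_eq_mul_div, div_lt_iff₀ hbpos']
        rw [hbdef]
        nlinarith
      refine ⟨a / b, (a / b) ^ 2 / (2 * (1 - (a / b) * α / 3)), by positivity, ?_, ?_, ?_⟩
      · rw [h1]; positivity
      · intro x hx
        exact exp_taylor_bound (by positivity) hlα3 hx
      · rw [h1]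
        have hd : 2 * β + 2 * α * a / 3 = 2 * b := by rw [hbdef]; ring
        rw [hd]
        field_simp
        ring
  have h1 := main l c hl hc hexpb 1 (Or.inl rfl)
  have h2 := main l c hl hc hexpb (-1) (Or.inr rfl)
  have hsplit : {ω | a ≤ |Z ω - m| ∧
        (∑ i ∈ Finset.Icc 1 t,
          (μ[fun ω' => ((μ[Z|𝒢 i]) ω' - (μ[(μ[Z|𝒢 i])|𝒢 (i - 1)]) ω') ^ 2|𝒢 (i - 1)]) ω)
          ≤ β ∧
        ((Finset.Icc 1 t).sup' (Finset.nonempty_Icc.mpr ht)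
          (fun i => condSup (𝒢 (i - 1))
            (fun ω' => |(μ[Z|𝒢 i]) ω' - (μ[Z|𝒢 (i - 1)]) ω'|) ω)) ≤ α}
      ⊆ {ω | a ≤ 1 * (Z ω - m) ∧
          (∑ i ∈ Icc 1 t,
            (μ[fun ω' => ((μ[Z|𝒢 i]) ω' - (μ[(μ[Z|𝒢 i])|𝒢 (i - 1)]) ω') ^ 2|𝒢 (i - 1)]) ω)
            ≤ β ∧
          ∀ i ∈ Icc 1 t, condSup (𝒢 (i - 1))
            (fun ω' => |(μ[Z|𝒢 i]) ω' - (μ[Z|𝒢 (i - 1)]) ω'|) ω ≤ α}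
        ∪ {ω | a ≤ (-1) * (Z ω - m) ∧
          (∑ i ∈ Icc 1 t,
            (μ[fun ω' => ((μ[Z|𝒢 i]) ω' - (μ[(μ[Z|𝒢 i])|𝒢 (i - 1)]) ω') ^ 2|𝒢 (i - 1)]) ω)
            ≤ β ∧
          ∀ i ∈ Icc 1 t, condSup (𝒢 (i - 1))
            (fun ω' => |(μ[Z|𝒢 i]) ω' - (μ[Z|𝒢 (i - 1)]) ω'|) ω ≤ α} := by
    intro ω hω
    obtain ⟨hω1, hω2, hω3⟩ := hω
    have hω3' : ∀ i ∈ Icc 1 t, condSup (𝒢 (i - 1))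
        (fun ω' => |(μ[Z|𝒢 i]) ω' - (μ[Z|𝒢 (i - 1)]) ω'|) ω ≤ α :=
      (Finset.sup'_le_iff _ _).mp hω3
    rcases le_abs.mp hω1 with h | h
    · exact Or.inl ⟨by linarith, hω2, hω3'⟩
    · exact Or.inr ⟨by linarith, hω2, hω3'⟩
  calc μ _ ≤ μ (_ ∪ _) := measure_mono hsplit
    _ ≤ _ + _ := measure_union_le _ _
    _ ≤ ENNReal.ofReal (Real.exp (-(l * a) + c * β))
        + ENNReal.ofReal (Real.exp (-(l * a) + c * β)) := add_le_add h1 h2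
    _ = ENNReal.ofReal (2 * Real.exp (-a ^ 2 / (2 * β + 2 * α * a / 3))) := by
        rw [← ENNReal.ofReal_add (Real.exp_nonneg _) (Real.exp_nonneg _), hexponent]
        ring_nf
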